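/- Let q be a prime power and n ≥ 1 an integer, and let π_n be the number of monic irreducible polynomials of degree n in 𝔽_q[x]. Then |n·π_n − q^n| ≤ Σ_{k | n, k ≤ n/2} q^k ≤ 2·q^{n/2}. -/

import Mathlib

open Polynomial

lemma auxC {q d n : ℕ} (hq : 2 ≤ q) (hd : 1 ≤ d)
    (h : q ^ d - 1 ∣ q ^ n - 1) : d ∣ n := by
  induction n using Nat.strong_induction_on with
  | _ n ih =>
    rcases lt_or_ge n d with hlt | hge
    · have h1 : q ^ n < q ^ d := Nat.pow_lt_pow_right (by omega) hlt
      have h3 : 1 ≤ q ^ n := Nat.one_le_pow _ _ (by omega)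
      have h2 : q ^ n - 1 = 0 := Nat.eq_zero_of_dvd_of_lt h (by omega)
      have h4 : q ^ n = 1 := by omega
      have h5 : n = 0 := by
        by_contra hne
        have : q ≤ q ^ n := Nat.le_self_pow hne q
        omega
      simp [h5]
    · have e1 : q ^ (n - d) * (q ^ d - 1) = q ^ n - q ^ (n - d) := by
        rw [Nat.mul_sub, mul_one, ← pow_add, Nat.sub_add_cancel hge]
      have h2 : q ^ d - 1 ∣ q ^ n - q ^ (n - d) := ⟨q ^ (n - d), by rw [mul_comm]; exact e1.symm⟩
      have h3 : 1 ≤ q ^ (n - d) := Nat.one_le_pow _ _ (by omega)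
      have h4 : q ^ (n - d) ≤ q ^ n := Nat.pow_le_pow_right (by omega) (by omega)
      have h5 : (q ^ n - 1) - (q ^ n - q ^ (n - d)) = q ^ (n - d) - 1 := by omega
      have h6 : q ^ d - 1 ∣ q ^ (n - d) - 1 := h5 ▸ Nat.dvd_sub h h2
      have h7 : d ∣ n - d := ih (n - d) (by omega) h6
      have : d ∣ (n - d) + d := Dvd.dvd.add h7 dvd_rfl
      rwa [Nat.sub_add_cancel hge] at this

lemma auxD {q : ℕ} (hq : 2 ≤ q) (m : ℕ) : ∑ k ∈ Finset.Icc 1 m, q ^ k ≤ 2 * q ^ m - 2 := by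
  induction m with
  | zero => simp
  | succ m ih =>
    rw [Finset.sum_Icc_succ_top (by omega)]
    have h1 : 2 * q ^ m ≤ q ^ (m + 1) := by
      rw [pow_succ, mul_comm]
      exact Nat.mul_le_mul_left _ hq
    have h2 : 1 ≤ q ^ m := Nat.one_le_pow _ _ (by omega)
    omega

lemma auxA {F : Type*} [Field F] [Fintype F] {g : F[X]}
    (hg : g.Monic) (hgi : Irreducible g) {n : ℕ} (hn : 1 ≤ n) :
    g ∣ X ^ Fintype.card F ^ n - X ↔ g.natDegree ∣ n := by
  haveI : Fact (Irreducible g) := ⟨hgi⟩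
  set q := Fintype.card F with hq
  have hq2 : 2 ≤ q := Fintype.one_lt_card
  set d := g.natDegree with hdd
  have hd1 : 1 ≤ d := hgi.natDegree_pos
  have hgne : g ≠ 0 := hg.ne_zero
  let pb := AdjoinRoot.powerBasis hgne
  haveI : Fintype (AdjoinRoot g) := Module.fintypeOfFintype pb.basis
  have hK : Fintype.card (AdjoinRoot g) = q ^ d := by
    rw [Module.card_fintype pb.basis, Fintype.card_fin, AdjoinRoot.powerBasis_dim]
  have hroot : g ∣ X ^ q ^ n - X ↔ (AdjoinRoot.root g) ^ q ^ n = AdjoinRoot.root g := by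
    rw [← AdjoinRoot.mk_eq_zero, map_sub, map_pow, sub_eq_zero]
    constructor
    · intro h; exact_mod_cast h
    · intro h; exact_mod_cast h
  rw [hroot]
  constructor
  · intro h
    -- all elements of AdjoinRoot g satisfy x ^ q ^ n = x
    obtain ⟨p, hp⟩ := CharP.exists F
    haveI : Fact p.Prime := ⟨CharP.char_is_prime F p⟩
    obtain ⟨m, hpm, hqm⟩ := FiniteField.card F p
    haveI : CharP (AdjoinRoot g) p :=
      charP_of_injective_algebraMap (algebraMap F (AdjoinRoot g)).injective p
    have key : ∀ x : AdjoinRoot g, x ^ q ^ n = x := by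
      have hE : (⊤ : Subalgebra F (AdjoinRoot g)) ≤
          { carrier := {x : AdjoinRoot g | x ^ q ^ n = x}
            mul_mem' := fun {a b} ha hb => by
              simp only [Set.mem_setOf_eq] at *; rw [mul_pow, ha, hb]
            one_mem' := one_pow _
            add_mem' := fun {a b} ha hb => by
              simp only [Set.mem_setOf_eq] at ha hb ⊢
              have hqn : q ^ n = p ^ ((m : ℕ) * n) := by rw [pow_mul, ← hqm]
              rw [hqn] at ha hb ⊢
              rw [add_pow_char_pow, ha, hb]
            zero_mem' := by
              simp only [Set.mem_setOf_eq]
              exact zero_pow (by positivity)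
            algebraMap_mem' := fun a => by
              simp only [Set.mem_setOf_eq, ← map_pow]
              rw [show q = Fintype.card F from rfl, FiniteField.pow_card_pow] } := by
        rw [← AdjoinRoot.adjoinRoot_eq_top (f := g)]
        apply Algebra.adjoin_le
        intro x hx
        rcases Set.mem_singleton_iff.mp hx with rfl
        exact h
      intro x
      exact hE (Algebra.mem_top) -- membership in the subalgebra carrier
    have hunits : ∀ x : (AdjoinRoot g)ˣ, x ^ (q ^ n - 1) = 1 := by
      intro x
      have hx : (x : AdjoinRoot g) ^ q ^ n = x := key x
      have hx0 : (x : AdjoinRoot g) ≠ 0 := Units.ne_zero x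
      have h1 : (x : AdjoinRoot g) ^ (q ^ n - 1) = 1 := by
        have hqn : 1 ≤ q ^ n := Nat.one_le_pow _ _ (by omega)
        have : (x : AdjoinRoot g) ^ (q ^ n - 1) * x = 1 * x := by
          rw [one_mul, ← pow_succ, Nat.sub_add_cancel hqn, hx]
        exact mul_right_cancel₀ hx0 this
      ext
      push_cast
      exact h1
    have hdvd : Fintype.card (AdjoinRoot g) - 1 ∣ q ^ n - 1 :=
      (FiniteField.forall_pow_eq_one_iff _ _).mp hunits
    rw [hK] at hdvd
    exact auxC hq2 hd1 hdvd
  · rintro ⟨c, rfl⟩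
    have : q ^ (d * c) = Fintype.card (AdjoinRoot g) ^ c := by rw [hK, ← pow_mul]
    rw [this]
    exact FiniteField.pow_card_pow c _

open UniqueFactorizationMonoid in
lemma auxB {F : Type*} [Field F] [Fintype F] {m : ℕ} (hm : 1 ≤ m) :
    ∑ d ∈ m.divisors, d * {p : F[X] | p.Monic ∧ Irreducible p ∧ p.natDegree = d}.ncard
      = Fintype.card F ^ m := by
  classical
  set q := Fintype.card F with hq
  have hq2 : 2 ≤ q := Fintype.one_lt_card
  set P : F[X] := X ^ q ^ m - X with hP
  have hP0 : P ≠ 0 := FiniteField.X_pow_card_pow_sub_X_ne_zero F (by omega) (by omega)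
  have hPdeg : P.natDegree = q ^ m := FiniteField.X_pow_card_pow_sub_X_natDegree_eq F (by omega) (by omega)
  -- separable hence squarefree
  obtain ⟨p, hp⟩ := CharP.exists F
  haveI : Fact p.Prime := ⟨CharP.char_is_prime F p⟩
  obtain ⟨s, hps, hqs⟩ := FiniteField.card F p
  have hsep : P.Separable := by
    apply galois_poly_separable p (q ^ m)
    rw [hq, hqs, ← pow_mul]
    exact dvd_pow_self p (by positivity)
  have hsf : Squarefree P := hsep.squarefree
  have hnodup : (normalizedFactors P).Nodup :=
    (squarefree_iff_nodup_normalizedFactors hP0).mp hsf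
  set T : Finset F[X] := (normalizedFactors P).toFinset with hT
  have hTval : T.val = normalizedFactors P := Multiset.dedup_eq_self.mpr hnodup
  -- each normalized factor is monic
  have hmonic : ∀ g ∈ normalizedFactors P, g.Monic := by
    intro g hgm
    have h0 : g ≠ 0 := (irreducible_of_normalized_factor g hgm).ne_zero
    have := normalize_normalized_factor g hgm
    rw [← this]
    exact monic_normalize h0
  -- membership characterization
  have hmem : ∀ g : F[X], g ∈ T ↔ g.Monic ∧ Irreducible g ∧ g.natDegree ∣ m := by
    intro g
    rw [hT, Multiset.mem_toFinset]
    constructor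
    · intro hgm
      have h1 := hmonic g hgm
      have h2 := irreducible_of_normalized_factor g hgm
      have h3 := dvd_of_mem_normalizedFactors hgm
      exact ⟨h1, h2, (auxA h1 h2 hm).mp h3⟩
    · rintro ⟨h1, h2, h3⟩
      have hdvd : g ∣ P := (auxA h1 h2 hm).mpr h3
      obtain ⟨g', hg'mem, hass⟩ := exists_mem_normalizedFactors_of_dvd hP0 h2 hdvd
      rwa [eq_of_monic_of_associated h1 (hmonic g' hg'mem) hass]
  -- product of factors is P, so sum of degrees is q^m
  have hassoc : Associated (normalizedFactors P).prod P := prod_normalizedFactors hP0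
  have hprodmonic : (normalizedFactors P).prod.Monic := by
    have := monic_multiset_prod_of_monic (normalizedFactors P) id (fun g hg => hmonic g hg)
    simpa using this
  have hqm2 : 2 ≤ q ^ m := le_trans hq2 (Nat.le_self_pow (by omega) q)
  have hPmonic : P.Monic := by
    have hdlt : (X : F[X]).degree < (X ^ q ^ m : F[X]).degree := by
      rw [degree_X_pow, degree_X]
      exact_mod_cast (by omega : 1 < q ^ m)
    exact (monic_X_pow _).sub_of_left hdlt
  have hEq : (normalizedFactors P).prod = P :=
    eq_of_monic_of_associated hprodmonic hPmonic hassoc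
  have hdegsum : ∑ g ∈ T, g.natDegree = q ^ m := by
    have h0 : (0 : F[X]) ∉ normalizedFactors P := zero_notMem_normalizedFactors P
    have hnd := natDegree_multiset_prod (normalizedFactors P) h0
    rw [hEq, hPdeg] at hnd
    rw [Finset.sum, hTval, ← hnd]
  -- fiberwise sum over divisors
  have hmaps : ∀ g ∈ T, g.natDegree ∈ m.divisors := by
    intro g hgT
    rw [Nat.mem_divisors]
    exact ⟨((hmem g).mp hgT).2.2, by omega⟩
  have hfiber := Finset.sum_fiberwise_of_maps_to hmaps (fun g => g.natDegree)
  rw [← hdegsum, ← hfiber]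
  apply Finset.sum_congr rfl
  intro d hd
  rw [Nat.mem_divisors] at hd
  have hset : {p : F[X] | p.Monic ∧ Irreducible p ∧ p.natDegree = d}
      = ↑(T.filter (fun g => g.natDegree = d)) := by
    ext g
    simp only [Set.mem_setOf_eq, Finset.coe_filter, hmem]
    constructor
    · rintro ⟨h1, h2, h3⟩; exact ⟨⟨h1, h2, h3 ▸ hd.1⟩, h3⟩
    · rintro ⟨⟨h1, h2, _⟩, h3⟩; exact ⟨h1, h2, h3⟩
  rw [hset, Set.ncard_coe_finset]
  rw [Finset.sum_congr rfl (fun g hg => (Finset.mem_filter.mp hg).2)]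
  rw [Finset.sum_const, smul_eq_mul, mul_comm]

/-- Bound on the count `π_n` of monic irreducible polynomials of degree `n` over `𝔽_q`:
`|n·π_n − q^n| ≤ Σ_{k ∣ n, k ≤ n/2} q^k ≤ 2·q^{n/2}`. -/
theorem irreducible_count_estimate
    {F : Type*} [Field F] [Fintype F] (q n : ℕ) (hq : IsPrimePow q)
    (hcardF : Fintype.card F = q) (hn : 1 ≤ n) :
    |((n * {p : Polynomial F | p.Monic ∧ Irreducible p ∧ p.natDegree = n}.ncard : ℕ) : ℝ)
        - (q : ℝ) ^ n|
      ≤ ∑ k ∈ n.divisors.filter (fun k => 2 * k ≤ n), (q : ℝ) ^ k ∧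
    (∑ k ∈ n.divisors.filter (fun k => 2 * k ≤ n), (q : ℝ) ^ k)
      ≤ 2 * (q : ℝ) ^ ((n : ℝ) / 2) := by
  subst hcardF
  set q := Fintype.card F with hq'
  have hq2 : 2 ≤ q := Fintype.one_lt_card
  set π : ℕ → ℕ := fun d => {p : Polynomial F | p.Monic ∧ Irreducible p ∧ p.natDegree = d}.ncard
    with hπ
  have G : ∀ m : ℕ, 1 ≤ m → ∑ d ∈ m.divisors, d * π d = q ^ m := fun m hm => auxB hm
  have bound_d : ∀ d : ℕ, 1 ≤ d → d * π d ≤ q ^ d := by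
    intro d hd
    rw [← G d hd]
    exact Finset.single_le_sum (f := fun e => e * π e) (fun i _ => Nat.zero_le _)
      (Nat.mem_divisors_self d (by omega))
  set S := n.divisors.filter (fun k => 2 * k ≤ n) with hS
  -- split divisors
  have hsplit : q ^ n = (∑ k ∈ S, k * π k) + n * π n := by
    rw [← G n hn, ← Finset.sum_filter_add_sum_filter_not n.divisors (fun k => 2 * k ≤ n)]
    congr 1
    have : n.divisors.filter (fun k => ¬ 2 * k ≤ n) = {n} := by
      ext k
      simp only [Finset.mem_filter, Nat.mem_divisors, Finset.mem_singleton]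
      constructor
      · rintro ⟨⟨hkd, hn0⟩, hk⟩
        by_contra hne
        obtain ⟨c, rfl⟩ := hkd
        have hc2 : 2 ≤ c := by
          rcases Nat.lt_or_ge c 2 with hc | hc
          · interval_cases c <;> simp_all <;> omega
          · exact hc
        have : 2 * k ≤ k * c := by nlinarith
        omega
      · rintro rfl
        exact ⟨⟨dvd_rfl, by omega⟩, by omega⟩
    rw [this, Finset.sum_singleton]
  have hA_le : (∑ k ∈ S, k * π k) ≤ ∑ k ∈ S, q ^ k := by
    apply Finset.sum_le_sum
    intro k hk
    rw [hS, Finset.mem_filter, Nat.mem_divisors] at hk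
    exact bound_d k (Nat.pos_of_dvd_of_pos hk.1.1 (by omega))
  constructor
  · have h1 : ((n * π n : ℕ) : ℝ) - (q : ℝ) ^ n = -((∑ k ∈ S, k * π k : ℕ) : ℝ) := by
      have : ((q ^ n : ℕ) : ℝ) = ((∑ k ∈ S, k * π k : ℕ) : ℝ) + ((n * π n : ℕ) : ℝ) := by
        rw [← Nat.cast_add, hsplit]
      push_cast at this ⊢
      linarith
    rw [h1, abs_neg, abs_of_nonneg (by positivity)]
    calc ((∑ k ∈ S, k * π k : ℕ) : ℝ) ≤ ((∑ k ∈ S, q ^ k : ℕ) : ℝ) := by exact_mod_cast hA_le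
      _ = ∑ k ∈ S, (q : ℝ) ^ k := by push_cast; ring
  · -- second inequality
    set m := n / 2 with hm
    have hsub : S ⊆ Finset.Icc 1 m := by
      intro k hk
      rw [hS, Finset.mem_filter, Nat.mem_divisors] at hk
      rw [Finset.mem_Icc]
      constructor
      · exact Nat.pos_of_dvd_of_pos hk.1.1 (by omega)
      · omega
    have h1 : (∑ k ∈ S, q ^ k) ≤ ∑ k ∈ Finset.Icc 1 m, q ^ k :=
      Finset.sum_le_sum_of_subset hsub
    have h2 := auxD hq2 m
    have h3 : (∑ k ∈ S, q ^ k : ℕ) ≤ 2 * q ^ m := by omega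
    have h4 : ((2 * q ^ m : ℕ) : ℝ) ≤ 2 * (q : ℝ) ^ ((n : ℝ) / 2) := by
      push_cast
      have hqm : (q : ℝ) ^ m = (q : ℝ) ^ (m : ℝ) := (Real.rpow_natCast _ _).symm
      rw [hqm]
      have hmn : ((m : ℕ) : ℝ) ≤ (n : ℝ) / 2 := by
        have h5 := Nat.cast_div_le (α := ℝ) (m := n) (n := 2)
        push_cast at h5
        simpa [hm] using h5
      nlinarith [Real.rpow_le_rpow_of_exponent_le (by exact_mod_cast (by omega : (1:ℕ) ≤ q) : (1:ℝ) ≤ (q:ℝ)) hmn]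
    calc ∑ k ∈ S, (q : ℝ) ^ k = ((∑ k ∈ S, q ^ k : ℕ) : ℝ) := by push_cast; ring
      _ ≤ ((2 * q ^ m : ℕ) : ℝ) := by exact_mod_cast h3
      _ ≤ 2 * (q : ℝ) ^ ((n : ℝ) / 2) := h4
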